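/- arXiv:0706.0566 — 2 statements merged into one kernel-verified Lean document; each statement's English description precedes it below -/
import Mathlib

section
/- Let p be a prime with p ≡ 1 (mod 13) and p > 169. Let P(x) ∈ ℤ[x] be a monic polynomial of degree 4 all of whose complex roots have absolute value √p, and suppose its coefficient b of x² satisfies b ≡ 6 (mod 13). Then p does not divide b. (In particular |b| ≤ 6p, and |b| = 6p is impossible.) -/
open Polynomial

private lemma card4 {α : Type*} {s : Multiset α} (h : Multiset.card s = 4) :
    ∃ a b c d, s = {a,b,c,d} := by
  rcases s with ⟨l⟩
  match l, h with
  | [a,b,c,d], _ => exact ⟨a,b,c,d, rfl⟩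

private lemma eq_of_abs_eq_re {w : ℂ} {r : ℝ} (h1 : ‖w‖ = r) (h2 : w.re = r) :
    w = (r : ℂ) := by
  have him : w.im = 0 := by
    have := Complex.sq_norm w
    rw [Complex.normSq_apply, h1, h2] at this
    nlinarith
  exact Complex.ext h2 him

theorem stmt_11 (p : ℕ) (hp : p.Prime) (hmod : p % 13 = 1) (hbig : 169 < p)
    (P : Polynomial ℤ) (hmon : P.Monic) (hdeg : P.natDegree = 4)
    (hroots : ∀ z : ℂ, Polynomial.aeval z P = 0 → ‖z‖ = Real.sqrt p)
    (hb : P.coeff 2 ≡ 6 [ZMOD 13]) :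
    ¬ (p : ℤ) ∣ P.coeff 2 := by
  intro hdvd
  have hppos : (0:ℝ) < p := by positivity
  set Q : Polynomial ℂ := P.map (algebraMap ℤ ℂ) with hQdef
  have hQmon : Q.Monic := hmon.map _
  have hQdeg : Q.natDegree = 4 := by
    rw [hQdef, Polynomial.natDegree_map_eq_of_injective (algebraMap ℤ ℂ).injective_int, hdeg]
  have hcard : Multiset.card Q.roots = 4 := by
    rw [← hQdeg]
    exact (Polynomial.splits_iff_card_roots).1 (IsAlgClosed.splits Q)
  -- roots abs
  have habs : ∀ z ∈ Q.roots, ‖z‖ = Real.sqrt p := by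
    intro z hz
    apply hroots
    have := Polynomial.isRoot_of_mem_roots hz
    rwa [Polynomial.IsRoot, hQdef, Polynomial.eval_map, ← Polynomial.aeval_def] at this
  obtain ⟨z1, z2, z3, z4, hr⟩ := card4 hcard
  have h1 : ‖z1‖ = Real.sqrt p := habs z1 (by rw [hr]; simp)
  have h2 : ‖z2‖ = Real.sqrt p := habs z2 (by rw [hr]; simp)
  have h3 : ‖z3‖ = Real.sqrt p := habs z3 (by rw [hr]; simp)
  have h4 : ‖z4‖ = Real.sqrt p := habs z4 (by rw [hr]; simp)
  have hmul : ∀ x y : ℂ, ‖x‖ = Real.sqrt p → ‖y‖ = Real.sqrt p →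
      ‖x * y‖ = p := by
    intro x y hx hy
    rw [norm_mul, hx, hy, Real.mul_self_sqrt hppos.le]
  have h12 := hmul z1 z2 h1 h2
  have h13 := hmul z1 z3 h1 h3
  have h14 := hmul z1 z4 h1 h4
  have h23 := hmul z2 z3 h2 h3
  have h24 := hmul z2 z4 h2 h4
  have h34 := hmul z3 z4 h3 h4
  -- Vieta for coeff 2
  have hcoeff2 : (P.coeff 2 : ℂ) = z1*z2+z1*z3+z1*z4+z2*z3+z2*z4+z3*z4 := by
    have := Polynomial.coeff_eq_esymm_roots_of_card (k := 2)
      (hcard.trans hQdeg.symm) (by rw [hQdeg]; norm_num)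
    rw [hQmon.leadingCoeff, hQdeg, hr] at this
    have e2 : Multiset.esymm ({z1,z2,z3,z4} : Multiset ℂ) 2
        = z1*z2+z1*z3+z1*z4+z2*z3+z2*z4+z3*z4 := by
      simp [Multiset.esymm, Multiset.powersetCard_cons, Multiset.powersetCard_zero_left,
        Multiset.powersetCard_one]
      ring
    rw [show (4-2 : ℕ) = 2 from rfl, e2] at this
    simpa [hQdef] using this
  -- b = 6 p
  have hble : |P.coeff 2| ≤ 6 * p := by
    have : (|P.coeff 2| : ℝ) ≤ 6 * p := by
      have : ‖(P.coeff 2 : ℂ)‖ ≤ 6 * p := by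
        rw [hcoeff2]
        have T : ∀ u v : ℂ, ‖u+v‖ ≤ ‖u‖ + ‖v‖ :=
          norm_add_le
        calc ‖z1*z2+z1*z3+z1*z4+z2*z3+z2*z4+z3*z4‖
            ≤ ‖z1*z2+z1*z3+z1*z4+z2*z3+z2*z4‖ + ‖z3*z4‖ := T _ _
          _ ≤ ‖z1*z2+z1*z3+z1*z4+z2*z3‖ + ‖z2*z4‖
              + ‖z3*z4‖ := by gcongr <;> exact T _ _
          _ ≤ ‖z1*z2+z1*z3+z1*z4‖ + ‖z2*z3‖ + ‖z2*z4‖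
              + ‖z3*z4‖ := by gcongr <;> exact T _ _
          _ ≤ ‖z1*z2+z1*z3‖ + ‖z1*z4‖ + ‖z2*z3‖
              + ‖z2*z4‖ + ‖z3*z4‖ := by
              gcongr <;> exact T _ _
          _ ≤ ‖z1*z2‖ + ‖z1*z3‖ + ‖z1*z4‖
              + ‖z2*z3‖ + ‖z2*z4‖ + ‖z3*z4‖ := by
              gcongr <;> exact T _ _
          _ = 6 * p := by rw [h12, h13, h14, h23, h24, h34]; ring
      calc (|P.coeff 2| : ℝ) = ‖(P.coeff 2 : ℂ)‖ := by
            rw [Complex.norm_intCast]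
        _ ≤ 6 * p := this
    exact_mod_cast this
  obtain ⟨c, hc⟩ := hdvd
  have hc6 : c = 6 := by
    have hcle : |c| ≤ 6 := by
      rw [hc, abs_mul, abs_of_nonneg (by positivity : (0:ℤ) ≤ (p:ℤ))] at hble
      nlinarith [abs_nonneg c, (by exact_mod_cast hbig.le : (169:ℤ) ≤ p)]
    have hcmod : c ≡ 6 [ZMOD 13] := by
      have hpmod : (p : ℤ) ≡ 1 [ZMOD 13] := by
        have : (p : ℤ) % 13 = 1 := by omega
        unfold Int.ModEq; omega
      have : (p : ℤ) * c ≡ 1 * c [ZMOD 13] := hpmod.mul_right c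
      calc c = 1 * c := by ring
        _ ≡ (p:ℤ) * c [ZMOD 13] := this.symm
        _ = P.coeff 2 := hc.symm
        _ ≡ 6 [ZMOD 13] := hb
    have := hcmod.dvd
    rw [abs_le] at hcle
    omega
  subst hc6
  -- equality case: each pair product = p
  have hre : (z1*z2).re + (z1*z3).re + (z1*z4).re + (z2*z3).re + (z2*z4).re + (z3*z4).re
      = 6 * p := by
    have : ((P.coeff 2 : ℂ)).re = 6 * p := by
      rw [hc]; push_cast; simp [mul_comm]
    rw [hcoeff2] at this
    simpa [Complex.add_re] using this
  have key : ∀ x y : ℂ, ‖x*y‖ = p → (x*y).re ≤ p := by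
    intro x y h
    calc (x*y).re ≤ ‖x*y‖ := Complex.re_le_norm _
      _ = p := h
  have k12 := key _ _ h12
  have k13 := key _ _ h13
  have k14 := key _ _ h14
  have k23 := key _ _ h23
  have k24 := key _ _ h24
  have k34 := key _ _ h34
  have e12 : (z1*z2).re = p := by linarith
  have e13 : (z1*z3).re = p := by linarith
  have e14 : (z1*z4).re = p := by linarith
  have e23 : (z2*z3).re = p := by linarith
  have p12 : z1*z2 = (p:ℂ) := eq_of_abs_eq_re h12 e12
  have p13 : z1*z3 = (p:ℂ) := eq_of_abs_eq_re h13 e13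
  have p14 : z1*z4 = (p:ℂ) := eq_of_abs_eq_re h14 e14
  have p23 : z2*z3 = (p:ℂ) := eq_of_abs_eq_re h23 e23
  have hz1ne : z1 ≠ 0 := by
    intro h; rw [h, zero_mul] at p12
    exact_mod_cast (by exact_mod_cast hppos.ne' : (p:ℂ) ≠ 0) p12.symm
  have hz2ne : z2 ≠ 0 := by
    intro h; rw [h, mul_zero] at p12
    exact_mod_cast (by exact_mod_cast hppos.ne' : (p:ℂ) ≠ 0) p12.symm
  have hz23 : z3 = z2 := mul_left_cancel₀ hz1ne (p13.trans p12.symm)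
  have hz24 : z4 = z2 := mul_left_cancel₀ hz1ne (p14.trans p12.symm)
  have hsq : z2 * z2 = (p:ℂ) := by rw [← hz23] at p23 ⊢; exact p23
  have hz12 : z1 = z2 := by
    apply mul_right_cancel₀ hz2ne
    rw [p12, hsq]
  -- Vieta for coeff 3
  have hcoeff3 : (P.coeff 3 : ℂ) = -(z1+z2+z3+z4) := by
    have := Polynomial.coeff_eq_esymm_roots_of_card (k := 3)
      (hcard.trans hQdeg.symm) (by rw [hQdeg]; norm_num)
    rw [hQmon.leadingCoeff, hQdeg, hr] at this
    have e1 : Multiset.esymm ({z1,z2,z3,z4} : Multiset ℂ) 1 = z1+z2+z3+z4 := by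
      simp [Multiset.esymm, Multiset.powersetCard_one]
      ring
    rw [show (4-3 : ℕ) = 1 from rfl, e1] at this
    simpa [hQdef] using this
  have ha2 : (P.coeff 3)^2 = 16 * p := by
    have : ((P.coeff 3 : ℤ) : ℂ)^2 = ((16 * (p:ℤ) : ℤ) : ℂ) := by
      rw [hcoeff3, hz12, hz23, hz24,
        show (-(z2+z2+z2+z2))^2 = 16*(z2*z2) by ring, hsq]
      push_cast; ring
    exact_mod_cast this
  have hpdvd : (p:ℤ) ∣ P.coeff 3 := by
    have hpp : Prime (p : ℤ) := Nat.prime_iff_prime_int.mp hp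
    exact hpp.dvd_of_dvd_pow (n := 2) ⟨16, by linarith [ha2]⟩
  obtain ⟨t, ht⟩ := hpdvd
  have h16 : (p:ℤ) * t^2 = 16 := by
    have hpne : (p:ℤ) ≠ 0 := by positivity
    have h : (p:ℤ) * ((p:ℤ) * t^2) = (p:ℤ) * 16 := by
      linear_combination ha2 - (P.coeff 3 + (p:ℤ)*t) * ht
    exact mul_left_cancel₀ hpne h
  have hple : (169:ℤ) < p := by exact_mod_cast hbig
  rcases eq_or_ne t 0 with rfl | ht0
  · simp at h16
  · have h1t : 1 ≤ t^2 := by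
      have : 0 < t^2 := by positivity
      omega
    have : (p:ℤ) ≤ (p:ℤ)*t^2 := le_mul_of_one_le_right (by positivity) h1t
    linarith
end

section
/- Let p be a prime and (a_n)_{n≥1} a sequence in ℤ_p with p ∤ a_p. Suppose u ∈ ℤ_p is such that (up)² − a_p(up) + p = 0, so that u·a_p ≡ 1 (mod p). Define f^{(−1)}(q) := Σ_{gcd(n,p)=1} (a_n/n) q^n ∈ ℤ_p[[q]] and f^{(−1)}_{[u]}(q) := Σ_{i≥0} Σ_{gcd(n,p)=1} u^i (a_n/n) q^{n p^i} ∈ ℤ_p[[q]]. Then, denoting reductions modulo p by bars, the identity −(f̄^{(−1)}_{[u]}(q))^p + ā_p · f̄^{(−1)}_{[u]}(q) = ā_p · f̄^{(−1)}(q) holds in 𝔽_p[[q]]. -/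
/-- `f^{(-1)}(q) = Σ_{gcd(n,p)=1} (a_n/n) q^n`, where `b n = a_n / n`. -/
noncomputable def fMinusOne (p : ℕ) [Fact p.Prime] (b : ℕ → ℤ_[p]) : PowerSeries ℤ_[p] :=
  PowerSeries.mk fun n => if p ∣ n then 0 else b n

/-- `f^{(-1)}_{[u]}(q) = Σ_{i ≥ 0} Σ_{gcd(n,p)=1} u^i (a_n/n) q^{n p^i}`:
the coefficient of `q^m` (for `m ≥ 1`, `m = n p^i` with `p ∤ n`) is `u^i (a_n/n)`. -/
noncomputable def fMinusOneU (p : ℕ) [Fact p.Prime] (b : ℕ → ℤ_[p]) (u : ℤ_[p]) :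
    PowerSeries ℤ_[p] :=
  PowerSeries.mk fun m =>
    if m = 0 then 0 else u ^ (m.factorization p) * b (m / p ^ (m.factorization p))

lemma coeff_pow_char {p : ℕ} [Fact p.Prime] (F : PowerSeries (ZMod p)) (n : ℕ) :
    PowerSeries.coeff n (F ^ p) =
      if p ∣ n then PowerSeries.coeff (n / p) F else 0 := by
  have hp : 0 < p := (Fact.out : p.Prime).pos
  set T := PowerSeries.trunc (n+1) F with hT
  have h1 : PowerSeries.coeff n (F ^ p) =
      PowerSeries.coeff n ((T : PowerSeries (ZMod p)) ^ p) := by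
    rw [← PowerSeries.coeff_coe_trunc_of_lt (Nat.lt_succ_self n),
      ← PowerSeries.trunc_trunc_pow F (n+1) p,
      PowerSeries.coeff_coe_trunc_of_lt (Nat.lt_succ_self n)]
  rw [h1, ← Polynomial.coe_pow, ← ZMod.expand_card, Polynomial.coeff_coe,
    Polynomial.coeff_expand hp]
  split_ifs with h
  · rw [hT, PowerSeries.coeff_trunc, if_pos (Nat.lt_succ_of_le (Nat.div_le_self n p))]
  · rfl

theorem stmt_14 (p : ℕ) [Fact p.Prime] (a : ℕ → ℤ_[p])
    (hap : ¬ (p : ℤ_[p]) ∣ a p)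
    (u : ℤ_[p]) (hu : (u * p) ^ 2 - a p * (u * p) + p = 0)
    (b : ℕ → ℤ_[p]) (hb : ∀ n : ℕ, ¬ p ∣ n → (n : ℤ_[p]) * b n = a n) :
    - (PowerSeries.map PadicInt.toZMod (fMinusOneU p b u)) ^ p
      + PowerSeries.C (PadicInt.toZMod (a p)) *
          PowerSeries.map PadicInt.toZMod (fMinusOneU p b u)
      = PowerSeries.C (PadicInt.toZMod (a p)) *
          PowerSeries.map PadicInt.toZMod (fMinusOne p b) := by
  have hpprime : p.Prime := Fact.out
  have hpne : (p : ℤ_[p]) ≠ 0 := Nat.cast_ne_zero.mpr hpprime.pos.ne'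
  -- key: ā_p * ū = 1
  have key0 : u ^ 2 * p - a p * u + 1 = 0 := by
    have : (p : ℤ_[p]) * (u ^ 2 * p - a p * u + 1) = 0 := by ring_nf; ring_nf at hu; linear_combination hu
    rcases mul_eq_zero.mp this with h | h
    · exact absurd h hpne
    · exact h
  have key : PadicInt.toZMod (a p) * PadicInt.toZMod u = 1 := by
    have := congrArg PadicInt.toZMod key0
    simp only [map_add, map_sub, map_mul, map_pow, map_one, map_zero] at this
    have hp0 : (PadicInt.toZMod (p : ℤ_[p]) : ZMod p) = 0 := by
      rw [map_natCast]; exact ZMod.natCast_self p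
    rw [hp0, mul_zero, zero_sub] at this
    linear_combination -this
  ext m
  simp only [PowerSeries.coeff_mk, map_add, map_neg, PowerSeries.coeff_C_mul,
    coeff_pow_char, PowerSeries.coeff_map, PowerSeries.coeff_mk]
  simp only [fMinusOneU, fMinusOne, PowerSeries.coeff_mk]
  by_cases hm0 : m = 0
  · subst hm0; simp [fMinusOneU, fMinusOne]
  by_cases hpm : p ∣ m
  · rw [if_pos hpm]
    set k := m / p with hk
    have hk0 : k ≠ 0 := by
      rcases hpm with ⟨c, rfl⟩
      simpa [hk, Nat.mul_div_cancel_left _ hpprime.pos] using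
        fun h => hm0 (by simp [h])
    have hm : m = p * k := (Nat.mul_div_cancel' hpm).symm
    have hfact : m.factorization p = k.factorization p + 1 := by
      rw [hm, Nat.factorization_mul hpprime.pos.ne' hk0]
      simp [hpprime.factorization_self, add_comm]
    have hdiv : m / p ^ (m.factorization p) = k / p ^ (k.factorization p) := by
      rw [hfact, hm, pow_succ, mul_comm (p ^ _) p, Nat.mul_div_mul_left _ _ hpprime.pos]
    rw [if_neg hk0, if_neg hm0, hdiv, hfact, if_pos hpm]
    simp only [map_mul, map_pow, map_zero, mul_zero]
    rw [pow_succ]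
    linear_combination (PadicInt.toZMod u ^ k.factorization p *
      PadicInt.toZMod (b (k / p ^ k.factorization p))) * key
  · simp [hpm, hm0, Nat.factorization_eq_zero_of_not_dvd hpm]
end
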